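/- arXiv:0801.4721 — 5 statements merged into one kernel-verified Lean document; each statement's English description precedes it below -/
import Mathlib

section
/- Let G be a compact, Hausdorff, second countable topological group, H a closed subgroup, Ω = G/H, and let U be a strongly continuous unitary representation of G on a complex separable Hilbert space 𝓗. Let C be a positive bounded operator on 𝓗 such that C U(h) = U(h) C for all h ∈ H and such that ∫_G ⟨ψ, U(g) C U(g)* ψ⟩ dμ_G(g) = ‖ψ‖² for every ψ ∈ 𝓗. Then there exists a unique U-covariant POVM E on Ω such that ⟨ψ, E(X) φ⟩ = ∫_{q⁻¹(X)} ⟨ψ, U(g) C U(g)* φ⟩ dμ_G(g) for every Borel set X ⊆ Ω and all ψ, φ ∈ 𝓗. -/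
open MeasureTheory
open scoped Pointwise ENNReal ComplexInnerProductSpace

noncomputable section

/-- A normalized positive operator valued measure on `Ω` acting in the complex Hilbert
space `𝓗`.  Positivity and `≤ 1` are required for Borel (measurable) sets, `E(Ω) = 1`,
`σ`-additivity holds in the weak operator topology, and (as a normalization convention)
the measure vanishes on non-measurable sets. -/
structure POVM (Ω : Type*) [MeasurableSpace Ω] (𝓗 : Type*) [NormedAddCommGroup 𝓗]
    [InnerProductSpace ℂ 𝓗] [CompleteSpace 𝓗] where
  toFun : Set Ω → (𝓗 →L[ℂ] 𝓗)
  isPositive' : ∀ X : Set Ω, MeasurableSet X → (toFun X).IsPositive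
  le_one' : ∀ X : Set Ω, MeasurableSet X → (1 - toFun X).IsPositive
  normalized' : toFun Set.univ = 1
  not_measurable' : ∀ X : Set Ω, ¬ MeasurableSet X → toFun X = 0
  m_iUnion' : ∀ X : ℕ → Set Ω, (∀ n, MeasurableSet (X n)) →
    Pairwise (Function.onFun Disjoint X) → ∀ φ ψ : 𝓗,
      HasSum (fun n => ⟪φ, toFun (X n) ψ⟫) ⟪φ, toFun (⋃ n, X n) ψ⟫

/-- Covariance of a POVM with respect to a family of unitaries `U`:
`U(g) E(X) U(g)* = E(gX)`, expressed weakly. -/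
def POVM.Covariant {G : Type*} [Group G] {Ω : Type*} [MeasurableSpace Ω] [MulAction G Ω]
    {𝓗 : Type*} [NormedAddCommGroup 𝓗] [InnerProductSpace ℂ 𝓗] [CompleteSpace 𝓗]
    (U : G → 𝓗 ≃ₗᵢ[ℂ] 𝓗) (E : POVM Ω 𝓗) : Prop :=
  ∀ (g : G) (X : Set Ω), MeasurableSet X → ∀ φ ψ : 𝓗,
    ⟪φ, E.toFun (g • X) ψ⟫ = ⟪(U g).symm φ, E.toFun X ((U g).symm ψ)⟫


set_option linter.unusedSectionVars false

namespace DaviesAux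

variable {G : Type*} [Group G] [TopologicalSpace G] [IsTopologicalGroup G] [CompactSpace G]
    [T2Space G] [SecondCountableTopology G] [MeasurableSpace G] [BorelSpace G]
    {𝓗 : Type*} [NormedAddCommGroup 𝓗] [InnerProductSpace ℂ 𝓗] [CompleteSpace 𝓗]
    (U : G → 𝓗 ≃ₗᵢ[ℂ] 𝓗) (C : 𝓗 →L[ℂ] 𝓗)

/-- The covariant density `T g = U g C U g⁻¹`. -/
def Tfun (g : G) (φ : 𝓗) : 𝓗 := U g (C ((U g).symm φ))

variable (hU_mul : ∀ g₁ g₂ : G, U (g₁ * g₂) = (U g₂).trans (U g₁))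
    (hU_cont : ∀ ψ : 𝓗, Continuous fun g => U g ψ)

include hU_mul in
theorem hU_one : ∀ ψ : 𝓗, U 1 ψ = ψ := by
  intro ψ
  have h3 : U (1 * 1) = U 1 := by rw [one_mul]
  have : U 1 ((U 1) ψ) = U 1 ψ := by
    rw [show (U 1) ((U 1) ψ) = ((U 1).trans (U 1)) ψ from rfl, ← hU_mul, h3]
  exact (U 1).injective this

include hU_mul in
theorem hU_symm (g : G) (ψ : 𝓗) : (U g).symm ψ = U g⁻¹ ψ := by
  have h : U g ((U g⁻¹) ψ) = ψ := by
    have h2 : U g ((U g⁻¹) ψ) = U (g * g⁻¹) ψ := by rw [hU_mul]; rfl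
    rw [h2, mul_inv_cancel]
    exact hU_one U hU_mul ψ
  rw [← h, LinearIsometryEquiv.symm_apply_apply, h]

include hU_cont in
theorem cont_aux {ψ : G → 𝓗} (hψ : Continuous ψ) : Continuous fun g => U g (ψ g) := by
  rw [continuous_iff_continuousAt]
  intro g₀
  rw [ContinuousAt, tendsto_iff_dist_tendsto_zero]
  have h1 : Filter.Tendsto
      (fun g => dist (ψ g) (ψ g₀) + dist (U g (ψ g₀)) (U g₀ (ψ g₀))) (nhds g₀) (nhds 0) := by
    have t1 : Filter.Tendsto (fun g => dist (ψ g) (ψ g₀)) (nhds g₀) (nhds 0) := by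
      simpa using ((hψ.tendsto g₀).dist (tendsto_const_nhds (x := ψ g₀)))
    have t2 : Filter.Tendsto (fun g => dist (U g (ψ g₀)) (U g₀ (ψ g₀))) (nhds g₀) (nhds 0) := by
      simpa using (((hU_cont (ψ g₀)).tendsto g₀).dist (tendsto_const_nhds (x := U g₀ (ψ g₀))))
    simpa using t1.add t2
  refine squeeze_zero (fun g => dist_nonneg) (fun g => ?_) h1
  calc dist (U g (ψ g)) (U g₀ (ψ g₀))
      ≤ dist (U g (ψ g)) (U g (ψ g₀)) + dist (U g (ψ g₀)) (U g₀ (ψ g₀)) := dist_triangle _ _ _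
    _ = dist (ψ g) (ψ g₀) + dist (U g (ψ g₀)) (U g₀ (ψ g₀)) := by rw [(U g).dist_map]

include hU_mul hU_cont in
theorem T_cont (φ : 𝓗) : Continuous fun g => Tfun U C g φ := by
  have h1 : Continuous fun g : G => C ((U g).symm φ) := by
    have : (fun g : G => (U g).symm φ) = fun g : G => U g⁻¹ φ := by
      funext g; exact hU_symm U hU_mul g φ
    exact C.continuous.comp (this ▸ ((hU_cont φ).comp continuous_inv))
  exact cont_aux U hU_cont h1

include hU_mul hU_cont in
theorem T_integrable (μG : Measure G) [IsFiniteMeasure μG] (φ : 𝓗) :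
    Integrable (fun g => Tfun U C g φ) μG :=
  (T_cont U C hU_mul hU_cont φ).integrable_of_hasCompactSupport
    (HasCompactSupport.of_compactSpace _)

theorem T_norm_le (g : G) (φ : 𝓗) : ‖Tfun U C g φ‖ ≤ ‖C‖ * ‖φ‖ := by
  rw [Tfun, (U g).norm_map]
  calc ‖C ((U g).symm φ)‖ ≤ ‖C‖ * ‖(U g).symm φ‖ := C.le_opNorm _
    _ = ‖C‖ * ‖φ‖ := by rw [(U g).symm.norm_map]

include hU_mul hU_cont in
theorem scalar_integrable (μG : Measure G) [IsFiniteMeasure μG] (ψ φ : 𝓗) :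
    Integrable (fun g => ⟪ψ, Tfun U C g φ⟫) μG :=
  (T_integrable U C hU_mul hU_cont μG φ).const_inner ψ

variable (μG : Measure G) [IsProbabilityMeasure μG]

/-- The operator `∫_s U g C U g⁻¹ dμ(g)`. -/
def Eop (s : Set G) : 𝓗 →L[ℂ] 𝓗 :=
  LinearMap.mkContinuous
    { toFun := fun φ => ∫ g in s, Tfun U C g φ ∂μG
      map_add' := by
        intro φ φ'
        have h : ∀ g, Tfun U C g (φ + φ') = Tfun U C g φ + Tfun U C g φ' := by
          intro g; simp [Tfun]
        simp_rw [h]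
        exact integral_add ((T_integrable U C hU_mul hU_cont μG φ).integrableOn)
          ((T_integrable U C hU_mul hU_cont μG φ').integrableOn)
      map_smul' := by
        intro c φ
        have h : ∀ g, Tfun U C g (c • φ) = c • Tfun U C g φ := by
          intro g; simp [Tfun]
        simp_rw [h]
        exact integral_smul c _ }
    ‖C‖
    (by
      intro φ
      simp only [LinearMap.coe_mk, AddHom.coe_mk]
      calc ‖∫ g in s, Tfun U C g φ ∂μG‖ ≤ (‖C‖ * ‖φ‖) * (μG s).toReal := by
            refine norm_setIntegral_le_of_norm_le_const (measure_lt_top μG s) ?_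
            · exact fun g _ => T_norm_le U C g φ
        _ ≤ (‖C‖ * ‖φ‖) * 1 := by
            refine mul_le_mul_of_nonneg_left ?_ (by positivity)
            exact ENNReal.toReal_le_of_le_ofReal one_pos.le (by simpa using prob_le_one (μ := μG) (s := s))
        _ = ‖C‖ * ‖φ‖ := mul_one _)

include hU_mul hU_cont in
theorem Eop_inner (s : Set G) (ψ φ : 𝓗) :
    ⟪ψ, Eop U C hU_mul hU_cont μG s φ⟫ = ∫ g in s, ⟪ψ, Tfun U C g φ⟫ ∂μG :=
  (integral_inner ((T_integrable U C hU_mul hU_cont μG φ).integrableOn) ψ).symm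

/-- The nonnegative density `g ↦ re ⟪C U g⁻¹ φ, U g⁻¹ φ⟫`. -/
def rker (g : G) (φ : 𝓗) : ℝ := RCLike.re ⟪C ((U g).symm φ), (U g).symm φ⟫

theorem T_inner_self (g : G) (φ : 𝓗) :
    ⟪φ, Tfun U C g φ⟫ = ⟪C ((U g).symm φ), (U g).symm φ⟫ → True := fun _ => trivial

theorem inner_T_eq (g : G) (ψ φ : 𝓗) :
    ⟪ψ, Tfun U C g φ⟫ = ⟪(U g).symm ψ, C ((U g).symm φ)⟫ := by
  calc ⟪ψ, Tfun U C g φ⟫ = ⟪(U g) ((U g).symm ψ), (U g) (C ((U g).symm φ))⟫ := by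
        rw [LinearIsometryEquiv.apply_symm_apply]; rfl
    _ = ⟪(U g).symm ψ, C ((U g).symm φ)⟫ := (U g).inner_map_map _ _

theorem inner_T_self_eq (hC_pos : C.IsPositive) (g : G) (φ : 𝓗) :
    ⟪φ, Tfun U C g φ⟫ = ((rker U C g φ : ℝ) : ℂ) := by
  rw [inner_T_eq, rker]
  set x := (U g).symm φ
  have h := (C.isPositive_iff_complex).mp hC_pos x
  rw [← inner_conj_symm, ← h.1]
  simp

theorem rker_nonneg (hC_pos : C.IsPositive) (g : G) (φ : 𝓗) : 0 ≤ rker U C g φ :=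
  ((C.isPositive_iff_complex).mp hC_pos ((U g).symm φ)).2

include hU_mul hU_cont in
theorem rker_integrable (μG : Measure G) [IsFiniteMeasure μG] (φ : 𝓗) :
    Integrable (fun g => rker U C g φ) μG := by
  have h1 : Continuous fun g : G => (U g).symm φ := by
    have : (fun g : G => (U g).symm φ) = fun g : G => U g⁻¹ φ := by
      funext g; exact hU_symm U hU_mul g φ
    exact this ▸ ((hU_cont φ).comp continuous_inv)
  have : Continuous fun g => rker U C g φ :=
    RCLike.continuous_re.comp ((C.continuous.comp h1).inner h1)
  exact this.integrable_of_hasCompactSupport (HasCompactSupport.of_compactSpace _)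

end DaviesAux

open DaviesAux

/-- Davies' construction: a positive operator `C` commuting with `U|_H`
and normalized by `∫_G U(g) C U(g)* dμ_G = I` determines a unique `U`-covariant POVM on
`Ω = G/H` via `E(X) = ∫_{q⁻¹(X)} U(g) C U(g)* dμ_G(g)`. -/
theorem extremal_covariant_povm_stmt0
    {G : Type*} [Group G] [TopologicalSpace G] [IsTopologicalGroup G] [CompactSpace G]
    [T2Space G] [SecondCountableTopology G] [MeasurableSpace G] [BorelSpace G]
    (μG : Measure G) [μG.IsHaarMeasure] [IsProbabilityMeasure μG]
    (H : Subgroup G) [MeasurableSpace (G ⧸ H)] [BorelSpace (G ⧸ H)]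
    {𝓗 : Type*} [NormedAddCommGroup 𝓗] [InnerProductSpace ℂ 𝓗] [CompleteSpace 𝓗]
    [TopologicalSpace.SeparableSpace 𝓗]
    (U : G → 𝓗 ≃ₗᵢ[ℂ] 𝓗)
    (hU_mul : ∀ g₁ g₂ : G, U (g₁ * g₂) = (U g₂).trans (U g₁))
    (hU_cont : ∀ ψ : 𝓗, Continuous fun g => U g ψ)
    (C : 𝓗 →L[ℂ] 𝓗) (hC_pos : C.IsPositive)
    (hC_comm : ∀ h ∈ H, ∀ ψ : 𝓗, C (U h ψ) = U h (C ψ))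
    (hC_norm : ∀ ψ : 𝓗, ∫ g, ⟪ψ, U g (C ((U g).symm ψ))⟫ ∂μG = (‖ψ‖ : ℂ) ^ 2) :
    ∃! E : POVM (G ⧸ H) 𝓗, E.Covariant U ∧
      ∀ X : Set (G ⧸ H), MeasurableSet X → ∀ ψ φ : 𝓗,
        ⟪ψ, E.toFun X φ⟫ =
          ∫ g in ((QuotientGroup.mk : G → G ⧸ H) ⁻¹' X),
            ⟪ψ, U g (C ((U g).symm φ))⟫ ∂μG := by
  classical
  have hqm : Measurable (QuotientGroup.mk : G → G ⧸ H) :=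
    QuotientGroup.continuous_mk.measurable
  set EF : Set (G ⧸ H) → (𝓗 →L[ℂ] 𝓗) := fun X =>
    if MeasurableSet X then
      Eop U C hU_mul hU_cont μG ((QuotientGroup.mk : G → G ⧸ H) ⁻¹' X) else 0 with hEFdef
  have hEF_inner : ∀ X : Set (G ⧸ H), MeasurableSet X → ∀ ψ φ : 𝓗,
      ⟪ψ, EF X φ⟫ = ∫ g in ((QuotientGroup.mk : G → G ⧸ H) ⁻¹' X),
        ⟪ψ, Tfun U C g φ⟫ ∂μG := by
    intro X hX ψ φ
    simp only [hEFdef, if_pos hX]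
    exact Eop_inner U C hU_mul hU_cont μG _ ψ φ
  have hr_nonneg : ∀ (g : G) (φ : 𝓗), 0 ≤ rker U C g φ := rker_nonneg U C hC_pos
  have hr_int : ∀ φ : 𝓗, Integrable (fun g => rker U C g φ) μG :=
    rker_integrable U C hU_mul hU_cont μG
  have hTr : ∀ (g : G) (φ : 𝓗), ⟪φ, Tfun U C g φ⟫ = ((rker U C g φ : ℝ) : ℂ) :=
    fun g φ => inner_T_self_eq U C hC_pos g φ
  have htot : ∀ φ : 𝓗, ∫ g, rker U C g φ ∂μG = ‖φ‖ ^ 2 := by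
    intro φ
    have h1 : ((∫ g, rker U C g φ ∂μG : ℝ) : ℂ) = ((‖φ‖ ^ 2 : ℝ) : ℂ) := by
      calc ((∫ g, rker U C g φ ∂μG : ℝ) : ℂ)
          = ∫ g, ((rker U C g φ : ℝ) : ℂ) ∂μG := integral_ofReal.symm
        _ = ∫ g, ⟪φ, Tfun U C g φ⟫ ∂μG := by simp_rw [hTr]
        _ = (‖φ‖ : ℂ) ^ 2 := hC_norm φ
        _ = ((‖φ‖ ^ 2 : ℝ) : ℂ) := by push_cast; ring
    exact_mod_cast h1
  have hEF_diag : ∀ X : Set (G ⧸ H), MeasurableSet X → ∀ φ : 𝓗,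
      ⟪φ, EF X φ⟫ =
        ((∫ g in ((QuotientGroup.mk : G → G ⧸ H) ⁻¹' X), rker U C g φ ∂μG : ℝ) : ℂ) := by
    intro X hX φ
    rw [hEF_inner X hX φ φ]
    simp_rw [hTr]
    exact integral_ofReal
  have hEF_diag' : ∀ X : Set (G ⧸ H), MeasurableSet X → ∀ φ : 𝓗,
      ⟪EF X φ, φ⟫ =
        ((∫ g in ((QuotientGroup.mk : G → G ⧸ H) ⁻¹' X), rker U C g φ ∂μG : ℝ) : ℂ) := by
    intro X hX φ
    rw [← inner_conj_symm, hEF_diag X hX φ, Complex.conj_ofReal]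
  -- positivity
  have hpos : ∀ X : Set (G ⧸ H), MeasurableSet X → (EF X).IsPositive := by
    intro X hX
    rw [ContinuousLinearMap.isPositive_iff_complex]
    intro x
    rw [hEF_diag' X hX x]
    constructor
    · simp
    · simpa using integral_nonneg fun g => hr_nonneg g x
  -- ≤ 1
  have hone : ∀ X : Set (G ⧸ H), MeasurableSet X → (1 - EF X).IsPositive := by
    intro X hX
    rw [ContinuousLinearMap.isPositive_iff_complex]
    intro x
    have hle : ∫ g in ((QuotientGroup.mk : G → G ⧸ H) ⁻¹' X), rker U C g x ∂μG ≤
        ∫ g, rker U C g x ∂μG :=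
      setIntegral_le_integral (hr_int x) (Filter.Eventually.of_forall fun g => hr_nonneg g x)
    rw [htot x] at hle
    obtain ⟨a, ha_eq, ha_nn⟩ : ∃ a : ℝ, ⟪(1 - EF X) x, x⟫ = (a : ℂ) ∧ 0 ≤ a := by
      refine ⟨‖x‖ ^ 2 - ∫ g in ((QuotientGroup.mk : G → G ⧸ H) ⁻¹' X), rker U C g x ∂μG,
        ?_, sub_nonneg.mpr hle⟩
      rw [ContinuousLinearMap.sub_apply, ContinuousLinearMap.one_apply, inner_sub_left,
        hEF_diag' X hX x, inner_self_eq_norm_sq_to_K]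
      have hcast : (RCLike.ofReal ‖x‖ : ℂ) = ((‖x‖ : ℝ) : ℂ) := rfl
      rw [hcast]
      push_cast
      ring
    rw [ha_eq]
    constructor
    · simp
    · simpa using ha_nn
  -- normalization
  have hnorm : EF Set.univ = 1 := by
    have key : ∀ x : 𝓗, ⟪x, EF Set.univ x⟫ = ⟪x, x⟫ := by
      intro x
      rw [hEF_inner Set.univ MeasurableSet.univ x x, Set.preimage_univ, Measure.restrict_univ,
        inner_self_eq_norm_sq_to_K]
      exact hC_norm x
    have hzero : ∀ x : 𝓗, ⟪((EF Set.univ - 1 : 𝓗 →L[ℂ] 𝓗) : 𝓗 →ₗ[ℂ] 𝓗) x, x⟫ = 0 := by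
      intro x
      have h1 : ⟪x, (EF Set.univ - 1 : 𝓗 →L[ℂ] 𝓗) x⟫ = 0 := by
        rw [ContinuousLinearMap.sub_apply, ContinuousLinearMap.one_apply, inner_sub_right, key x,
          sub_self]
      rw [show ((EF Set.univ - 1 : 𝓗 →L[ℂ] 𝓗) : 𝓗 →ₗ[ℂ] 𝓗) x
          = (EF Set.univ - 1 : 𝓗 →L[ℂ] 𝓗) x from rfl, ← inner_conj_symm, h1, map_zero]
    have h0 := (inner_map_self_eq_zero ((EF Set.univ - 1 : 𝓗 →L[ℂ] 𝓗) : 𝓗 →ₗ[ℂ] 𝓗)).mp hzero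
    have h2 : EF Set.univ - 1 = 0 := by
      refine ContinuousLinearMap.ext fun x => ?_
      have := LinearMap.ext_iff.mp h0 x
      simpa using this
    have := sub_eq_zero.mp h2
    exact this
  -- σ-additivity
  have hiUnion : ∀ X : ℕ → Set (G ⧸ H), (∀ n, MeasurableSet (X n)) →
      Pairwise (Function.onFun Disjoint X) → ∀ φ ψ : 𝓗,
      HasSum (fun n => ⟪φ, EF (X n) ψ⟫) ⟪φ, EF (⋃ n, X n) ψ⟫ := by
    intro X hX hd φ ψ
    have hXU : MeasurableSet (⋃ n, X n) := MeasurableSet.iUnion hX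
    have he : (fun n => ⟪φ, EF (X n) ψ⟫) = fun n =>
        ∫ g in ((QuotientGroup.mk : G → G ⧸ H) ⁻¹' X n), ⟪φ, Tfun U C g ψ⟫ ∂μG :=
      funext fun n => hEF_inner (X n) (hX n) φ ψ
    rw [he, hEF_inner _ hXU φ ψ, Set.preimage_iUnion]
    exact hasSum_integral_iUnion (fun n => hqm (hX n))
      (fun i j hij => (hd hij).preimage _)
      ((scalar_integrable U C hU_mul hU_cont μG φ ψ).integrableOn)
  -- covariance
  have hcov : ∀ (g : G) (X : Set (G ⧸ H)), MeasurableSet X → ∀ φ ψ : 𝓗,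
      ⟪φ, EF (g • X) ψ⟫ = ⟪(U g).symm φ, EF X ((U g).symm ψ)⟫ := by
    intro g X hX φ ψ
    have hgX : MeasurableSet (g • X) := by
      have hc : Continuous fun y : G ⧸ H => g⁻¹ • y := continuous_const_smul g⁻¹
      have hset : g • X = (fun y : G ⧸ H => g⁻¹ • y) ⁻¹' X := by
        ext y
        simp [Set.mem_smul_set_iff_inv_smul_mem]
      rw [hset]
      exact hc.measurable hX
    have hpre : (fun x : G => g * x) ⁻¹'
        ((QuotientGroup.mk : G → G ⧸ H) ⁻¹' (g • X)) =
        ((QuotientGroup.mk : G → G ⧸ H) ⁻¹' X) := by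
      ext x
      simp only [Set.mem_preimage]
      rw [Set.mem_smul_set_iff_inv_smul_mem, MulAction.Quotient.smul_mk, smul_eq_mul,
        inv_mul_cancel_left]
    have hT : ∀ x : G, ⟪φ, Tfun U C (g * x) ψ⟫ =
        ⟪(U g).symm φ, Tfun U C x ((U g).symm ψ)⟫ := by
      intro x
      have h1 : Tfun U C (g * x) ψ = U g (Tfun U C x ((U g).symm ψ)) := by
        rw [Tfun, Tfun, hU_mul g x]
        rfl
      rw [h1, ← inner_conj_symm, LinearIsometryEquiv.inner_map_eq_flip, inner_conj_symm]
    have hFc : Continuous fun k : G => ⟪φ, Tfun U C k ψ⟫ :=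
      continuous_const.inner (T_cont U C hU_mul hU_cont ψ)
    calc ⟪φ, EF (g • X) ψ⟫
        = ∫ k in ((QuotientGroup.mk : G → G ⧸ H) ⁻¹' (g • X)), ⟪φ, Tfun U C k ψ⟫ ∂μG :=
          hEF_inner _ hgX φ ψ
      _ = ∫ k in ((QuotientGroup.mk : G → G ⧸ H) ⁻¹' (g • X)), ⟪φ, Tfun U C k ψ⟫
            ∂(μG.map fun x => g * x) := by
          rw [MeasureTheory.map_mul_left_eq_self μG g]
      _ = ∫ x in (fun x : G => g * x) ⁻¹' ((QuotientGroup.mk : G → G ⧸ H) ⁻¹' (g • X)),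
            ⟪φ, Tfun U C (g * x) ψ⟫ ∂μG := by
          exact setIntegral_map (hqm hgX) hFc.aestronglyMeasurable
            (measurable_const_mul g).aemeasurable
      _ = ∫ x in ((QuotientGroup.mk : G → G ⧸ H) ⁻¹' X),
            ⟪(U g).symm φ, Tfun U C x ((U g).symm ψ)⟫ ∂μG := by
          rw [hpre]
          simp_rw [hT]
      _ = ⟪(U g).symm φ, EF X ((U g).symm ψ)⟫ := (hEF_inner X hX _ _).symm
  -- assembling
  refine ⟨⟨EF, hpos, hone, hnorm, fun X hX => if_neg hX, hiUnion⟩,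
    ⟨hcov, fun X hX ψ φ => hEF_inner X hX ψ φ⟩, ?_⟩
  rintro E' ⟨-, hP'⟩
  obtain ⟨f, p1, p2, p3, p4, p5⟩ := E'
  have hfun : f = EF := by
    funext X
    by_cases hX : MeasurableSet X
    · refine ContinuousLinearMap.ext fun φ => ext_inner_left ℂ fun ψ => ?_
      rw [hP' X hX ψ φ]
      exact (hEF_inner X hX ψ φ).symm
    · rw [p4 X hX]
      exact (if_neg hX).symm
  subst hfun
  rfl
end
end

section
/- Let G be a compact, Hausdorff, second countable abelian topological group, 𝓗 a complex separable Hilbert space with orthonormal basis (e_π)_{π∈Σ} indexed by a subset Σ ⊆ Ĝ, and U the unitary representation of G on 𝓗 with U(g) e_π = π(g) e_π. Let (v_π)_{π∈Σ} be unit vectors in a Hilbert space 𝒦 and (v'_π)_{π∈Σ} unit vectors in a Hilbert space 𝒦', and suppose that for all π, ρ ∈ Σ and every Borel set X ⊆ G one has ⟨v_ρ, v_π⟩ ∫_X \overline{π(g)} ρ(g) dμ_G(g) = ⟨v'_ρ, v'_π⟩ ∫_X \overline{π(g)} ρ(g) dμ_G(g) (i.e. the two families define the same covariant POVM). Then ⟨v_ρ,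 v_π⟩ = ⟨v'_ρ, v'_π⟩ for all π, ρ ∈ Σ. -/
open MeasureTheory
open scoped Pointwise ENNReal ComplexInnerProductSpace

noncomputable section

/-- (Compact abelian `G` acting on itself, multiplicity free case.)
Two families of unit vectors defining the same covariant POVM have the same Gram
matrix: if `⟨v_ρ, v_π⟩ ∫_X conj π ρ dμ_G = ⟨v'_ρ, v'_π⟩ ∫_X conj π ρ dμ_G` for all
Borel `X`, then `⟨v_ρ, v_π⟩ = ⟨v'_ρ, v'_π⟩`. -/
theorem extremal_covariant_povm_stmt8
    {G : Type*} [CommGroup G] [TopologicalSpace G] [IsTopologicalGroup G] [CompactSpace G]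
    [T2Space G] [SecondCountableTopology G] [MeasurableSpace G] [BorelSpace G]
    (μG : Measure G) [μG.IsHaarMeasure] [IsProbabilityMeasure μG]
    {ι : Type*}
    (χ : ι → G → ℂ)
    (hχ_cont : ∀ i, Continuous (χ i))
    (hχ_mul : ∀ i (g g' : G), χ i (g * g') = χ i g * χ i g')
    (hχ_norm : ∀ i g, ‖χ i g‖ = 1)
    {𝓗 : Type*} [NormedAddCommGroup 𝓗] [InnerProductSpace ℂ 𝓗] [CompleteSpace 𝓗]
    (e : HilbertBasis ι ℂ 𝓗)
    (U : G → 𝓗 ≃ₗᵢ[ℂ] 𝓗)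
    (hU : ∀ (g : G) (i : ι), U g (e i) = χ i g • e i)
    {𝒦 : Type*} [NormedAddCommGroup 𝒦] [InnerProductSpace ℂ 𝒦] [CompleteSpace 𝒦]
    {𝒦' : Type*} [NormedAddCommGroup 𝒦'] [InnerProductSpace ℂ 𝒦'] [CompleteSpace 𝒦']
    (v : ι → 𝒦) (hv : ∀ i, ‖v i‖ = 1)
    (v' : ι → 𝒦') (hv' : ∀ i, ‖v' i‖ = 1)
    (heq : ∀ (i j : ι) (X : Set G), MeasurableSet X →
      ⟪v j, v i⟫ * ∫ g in X, (starRingEnd ℂ) (χ i g) * χ j g ∂μG =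
        ⟪v' j, v' i⟫ * ∫ g in X, (starRingEnd ℂ) (χ i g) * χ j g ∂μG) :
    ∀ i j : ι, ⟪v j, v i⟫ = ⟪v' j, v' i⟫ := by
  intro i j
  set f : G → ℂ := fun g => (starRingEnd ℂ) (χ i g) * χ j g with hf
  have hf_cont : Continuous f := (Complex.continuous_conj.comp (hχ_cont i)).mul (hχ_cont j)
  have hχ1 : ∀ k : ι, χ k 1 = 1 := by
    intro k
    have h1 : χ k 1 * χ k 1 = χ k 1 := by rw [← hχ_mul k 1 1, one_mul]
    have hne : χ k 1 ≠ 0 := by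
      intro h; have := hχ_norm k 1; rw [h] at this; simp at this
    field_simp at h1
    exact h1
  have hf1 : f 1 = 1 := by simp [hf, hχ1 i, hχ1 j]
  set X : Set G := f ⁻¹' Metric.ball 1 (1/2) with hX
  have hXopen : IsOpen X := (Metric.isOpen_ball).preimage hf_cont
  have hXmem : (1 : G) ∈ X := by
    simp [hX, hf1, Metric.mem_ball]
  have hXpos : 0 < μG X := hXopen.measure_pos μG ⟨1, hXmem⟩
  have hint : IntegrableOn f X μG := (hf_cont.integrable_of_hasCompactSupport
    (HasCompactSupport.of_compactSpace f)).integrableOn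
  have hrepos : 0 < (∫ g in X, f g ∂μG).re := by
    have key := integral_re (μ := μG.restrict X) hint
    simp only [RCLike.re_to_complex] at key
    rw [← key]
    have hlow : ∀ g ∈ X, (1/2 : ℝ) ≤ (f g).re := by
      intro g hg
      have hball : dist (f g) 1 < 1/2 := by simpa [hX, Metric.mem_ball] using hg
      have h1 : |(f g - 1).re| ≤ ‖f g - 1‖ := Complex.abs_re_le_norm _
      have h2 : ‖f g - 1‖ < 1/2 := by rwa [dist_eq_norm] at hball
      have : |(f g).re - 1| < 1/2 := by
        simpa [Complex.sub_re] using lt_of_le_of_lt h1 h2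
      linarith [abs_lt.mp this |>.1]
    have hmeas : μG X ≠ ⊤ := (measure_lt_top μG X).ne
    have hconst : (∫ _ in X, (1/2 : ℝ) ∂μG) = (μG X).toReal * (1/2) := by
      rw [MeasureTheory.setIntegral_const, smul_eq_mul, measureReal_def]
    have hmono : (∫ _ in X, (1/2 : ℝ) ∂μG) ≤ ∫ g in X, (f g).re ∂μG := by
      apply MeasureTheory.setIntegral_mono_on
      · exact integrableOn_const (measure_lt_top μG X).ne
      · exact hint.re
      · exact hXopen.measurableSet
      · exact hlow
    have : 0 < (μG X).toReal * (1/2) := by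
      have := ENNReal.toReal_pos hXpos.ne' hmeas
      linarith
    linarith [hconst ▸ hmono]
  have hne : (∫ g in X, f g ∂μG) ≠ 0 := by
    intro h; rw [h] at hrepos; simp at hrepos
  have := heq i j X hXopen.measurableSet
  exact mul_right_cancel₀ hne this
end
end

section
/- Let X be a set, 𝓗 a complex Hilbert space, and K : X × X → L(𝓗) a map with values in the bounded operators on 𝓗 which is of positive type: for every finitely supported family (v_x)_{x∈X} of vectors of 𝓗, the sum Σ_{x,y∈X} ⟨v_x, K(x,y) v_y⟩ is a nonnegative real number. Then there exist a complex Hilbert space ℋ and a family of bounded operators γ_x : 𝓗 → ℋ (x ∈ X) such that K(x,y) = γ_x* ∘ γ_y for all x, y ∈ X and the linear span of ∪_{x∈X} range(γ_x) is dense in ℋ. -/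
open scoped ComplexInnerProductSpace ComplexOrder

noncomputable section

universe u v

/-- A factorization `K(x,y) = γ_x* ∘ γ_y` of an operator valued kernel through a complex
Hilbert space, with total range. -/
structure KernelFactorization {X : Type u} {𝓗 : Type v} [NormedAddCommGroup 𝓗]
    [InnerProductSpace ℂ 𝓗] [CompleteSpace 𝓗] (K : X → X → 𝓗 →L[ℂ] 𝓗) where
  space : Type (max u v)
  [normedAddCommGroup : NormedAddCommGroup space]
  [innerProductSpace : InnerProductSpace ℂ space]
  [completeSpace : CompleteSpace space]
  gamma : ∀ _ : X, 𝓗 →L[ℂ] space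
  factorizes : ∀ x y : X, K x y = (ContinuousLinearMap.adjoint (gamma x)).comp (gamma y)
  total : Dense ((Submodule.span ℂ (⋃ x : X, Set.range (gamma x)) : Submodule ℂ space) : Set space)

namespace Stmt9Aux

variable {X : Type u} {𝓗 : Type v} [NormedAddCommGroup 𝓗]
    [InnerProductSpace ℂ 𝓗] [CompleteSpace 𝓗]

/-- The semi-inner product on finitely supported families of vectors. -/
def B (K : X → X → 𝓗 →L[ℂ] 𝓗) (f g : X →₀ 𝓗) : ℂ :=
  f.sum fun x u => g.sum fun y v => ⟪u, K x y v⟫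

variable (K : X → X → 𝓗 →L[ℂ] 𝓗)

lemma B_single_single (x y : X) (u v : 𝓗) :
    B K (Finsupp.single x u) (Finsupp.single y v) = ⟪u, K x y v⟫ := by
  classical
  rw [B, Finsupp.sum_single_index (by simp [Finsupp.sum]),
    Finsupp.sum_single_index (by simp)]

lemma B_add_left (f₁ f₂ g : X →₀ 𝓗) : B K (f₁ + f₂) g = B K f₁ g + B K f₂ g := by
  classical
  unfold B
  rw [Finsupp.sum_add_index' (fun a => by simp [Finsupp.sum])
    (fun a b₁ b₂ => by simp [inner_add_left, Finsupp.sum_add])]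

lemma B_add_right (f g₁ g₂ : X →₀ 𝓗) : B K f (g₁ + g₂) = B K f g₁ + B K f g₂ := by
  classical
  unfold B
  rw [← Finsupp.sum_add]
  refine Finsupp.sum_congr fun x _ => ?_
  rw [Finsupp.sum_add_index' (fun a => by simp) (fun a b₁ b₂ => by simp [inner_add_right])]

lemma B_smul_left (r : ℂ) (f g : X →₀ 𝓗) :
    B K (r • f) g = (starRingEnd ℂ) r * B K f g := by
  classical
  unfold B
  rw [Finsupp.sum_smul_index' (fun i => by simp [Finsupp.sum])]
  rw [Finsupp.sum, Finsupp.sum, Finset.mul_sum]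
  refine Finset.sum_congr rfl fun x _ => ?_
  rw [Finsupp.sum, Finsupp.sum, Finset.mul_sum]
  exact Finset.sum_congr rfl fun y _ => by rw [inner_smul_left]

lemma B_smul_right (r : ℂ) (f g : X →₀ 𝓗) : B K f (r • g) = r * B K f g := by
  classical
  unfold B
  rw [Finsupp.sum, Finsupp.sum, Finset.mul_sum]
  refine Finset.sum_congr rfl fun x _ => ?_
  rw [Finsupp.sum_smul_index' (fun i => by simp)]
  rw [Finsupp.sum, Finsupp.sum, Finset.mul_sum]
  exact Finset.sum_congr rfl fun y _ => by rw [map_smul, inner_smul_right]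

lemma B_self_nonneg
    (hpos : ∀ (s : Finset X) (v : X → 𝓗),
      0 ≤ ∑ x ∈ s, ∑ y ∈ s, ⟪v x, (K x y) (v y)⟫)
    (f : X →₀ 𝓗) : 0 ≤ B K f f :=
  hpos f.support f

lemma B_self_im
    (hpos : ∀ (s : Finset X) (v : X → 𝓗),
      0 ≤ ∑ x ∈ s, ∑ y ∈ s, ⟪v x, (K x y) (v y)⟫)
    (f : X →₀ 𝓗) : (B K f f).im = 0 := by
  have h := B_self_nonneg K hpos f
  rw [Complex.le_def] at h
  simpa using h.2.symm

lemma B_conj_symm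
    (hpos : ∀ (s : Finset X) (v : X → 𝓗),
      0 ≤ ∑ x ∈ s, ∑ y ∈ s, ⟪v x, (K x y) (v y)⟫)
    (f g : X →₀ 𝓗) : (starRingEnd ℂ) (B K g f) = B K f g := by
  have e1 : B K (f + g) (f + g) = B K f f + (B K f g + B K g f) + B K g g := by
    rw [B_add_left, B_add_right, B_add_right]; ring
  have e2 : B K (f + Complex.I • g) (f + Complex.I • g)
      = B K f f + Complex.I * B K f g - Complex.I * B K g f + B K g g := by
    rw [B_add_left, B_add_right, B_add_right, B_smul_left, B_smul_right, B_smul_right,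
      B_smul_left, Complex.conj_I]
    linear_combination (-(B K g g)) * Complex.I_mul_I
  have h1 := B_self_im K hpos (f + g)
  have h2 := B_self_im K hpos (f + Complex.I • g)
  have hf := B_self_im K hpos f
  have hg := B_self_im K hpos g
  rw [e1] at h1
  rw [e2] at h2
  simp only [Complex.add_im, Complex.sub_im, Complex.mul_im, Complex.I_re, Complex.I_im,
    hf, hg, zero_mul, one_mul, mul_zero, zero_add, add_zero, mul_one] at h1 h2
  apply Complex.ext
  · simpa [Complex.conj_re] using by linarith
  · simpa [Complex.conj_im] using by linarith

/-- The pre-inner-product space core on finitely supported families. -/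
def core
    (hpos : ∀ (s : Finset X) (v : X → 𝓗),
      0 ≤ ∑ x ∈ s, ∑ y ∈ s, ⟪v x, (K x y) (v y)⟫) :
    PreInnerProductSpace.Core ℂ (X →₀ 𝓗) where
  inner := B K
  conj_inner_symm x y := B_conj_symm K hpos x y
  re_inner_nonneg x := by
    have h := B_self_nonneg K hpos x
    rw [Complex.le_def] at h
    simpa using h.1
  add_left := B_add_left K
  smul_left f g r := B_smul_left K r f g

end Stmt9Aux

/-- Every operator valued kernel of positive type factorizes as
`K(x,y) = γ_x* ∘ γ_y` through some Hilbert space, with the ranges of the `γ_x` total. -/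
theorem extremal_covariant_povm_stmt9 {X : Type u} {𝓗 : Type v} [NormedAddCommGroup 𝓗]
    [InnerProductSpace ℂ 𝓗] [CompleteSpace 𝓗] (K : X → X → 𝓗 →L[ℂ] 𝓗)
    (hpos : ∀ (s : Finset X) (v : X → 𝓗),
      0 ≤ ∑ x ∈ s, ∑ y ∈ s, ⟪v x, (K x y) (v y)⟫) :
    Nonempty (KernelFactorization K) := by
  classical
  letI c : PreInnerProductSpace.Core ℂ (X →₀ 𝓗) := Stmt9Aux.core K hpos
  letI : SeminormedAddCommGroup (X →₀ 𝓗) := InnerProductSpace.Core.toSeminormedAddCommGroup (𝕜 := ℂ) (F := X →₀ 𝓗)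
  letI : NormedSpace ℂ (X →₀ 𝓗) := InnerProductSpace.Core.toNormedSpace (𝕜 := ℂ) (F := X →₀ 𝓗)
  letI : InnerProductSpace ℂ (X →₀ 𝓗) :=
    { inner := c.inner
      norm_sq_eq_re_inner := fun f => by
        have h₁ : ‖f‖ ^ 2 = Real.sqrt (RCLike.re (c.inner f f)) ^ 2 := rfl
        rw [h₁, Real.sq_sqrt (c.re_inner_nonneg f)]
      conj_inner_symm := c.conj_inner_symm
      add_left := c.add_left
      smul_left := c.smul_left }
  set ℋ := UniformSpace.Completion (SeparationQuotient (X →₀ 𝓗)) with hℋ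
  let Q : (X →₀ 𝓗) →L[ℂ] ℋ :=
    (UniformSpace.Completion.toComplL (𝕜 := ℂ)).comp (SeparationQuotient.mkCLM ℂ (X →₀ 𝓗))
  have hQ : ∀ f g : X →₀ 𝓗, ⟪Q f, Q g⟫ = Stmt9Aux.B K f g := by
    intro f g
    show ⟪((SeparationQuotient.mk f : SeparationQuotient (X →₀ 𝓗)) : ℋ),
        ((SeparationQuotient.mk g : SeparationQuotient (X →₀ 𝓗)) : ℋ)⟫ = _
    rw [UniformSpace.Completion.inner_coe, SeparationQuotient.inner_mk_mk]
    rfl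
  have hbound : ∀ (x : X) (v : 𝓗),
      ‖(Finsupp.single x v : X →₀ 𝓗)‖ ≤ Real.sqrt ‖K x x‖ * ‖v‖ := by
    intro x v
    have h1 : ‖(Finsupp.single x v : X →₀ 𝓗)‖ ^ 2
        = RCLike.re (⟪(Finsupp.single x v : X →₀ 𝓗), (Finsupp.single x v : X →₀ 𝓗)⟫) :=
      InnerProductSpace.norm_sq_eq_re_inner _
    have h2 : (⟪(Finsupp.single x v : X →₀ 𝓗), (Finsupp.single x v : X →₀ 𝓗)⟫ : ℂ)
        = ⟪v, K x x v⟫ := Stmt9Aux.B_single_single K x x v v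
    have h3 : ‖(Finsupp.single x v : X →₀ 𝓗)‖ ^ 2 ≤ ‖K x x‖ * ‖v‖ ^ 2 := by
      rw [h1, h2]
      calc RCLike.re (⟪v, K x x v⟫ : ℂ) ≤ ‖(⟪v, K x x v⟫ : ℂ)‖ := RCLike.re_le_norm _
        _ ≤ ‖v‖ * ‖K x x v‖ := norm_inner_le_norm _ _
        _ ≤ ‖v‖ * (‖K x x‖ * ‖v‖) := by
            gcongr
            exact (K x x).le_opNorm v
        _ = ‖K x x‖ * ‖v‖ ^ 2 := by ring
    calc ‖(Finsupp.single x v : X →₀ 𝓗)‖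
        = Real.sqrt (‖(Finsupp.single x v : X →₀ 𝓗)‖ ^ 2) :=
          (Real.sqrt_sq (norm_nonneg _)).symm
      _ ≤ Real.sqrt (‖K x x‖ * ‖v‖ ^ 2) := Real.sqrt_le_sqrt h3
      _ = Real.sqrt ‖K x x‖ * ‖v‖ := by
          rw [Real.sqrt_mul (norm_nonneg _), Real.sqrt_sq (norm_nonneg _)]
  let γ : ∀ _ : X, 𝓗 →L[ℂ] ℋ := fun x =>
    Q.comp (LinearMap.mkContinuous (Finsupp.lsingle x) (Real.sqrt ‖K x x‖) (hbound x))
  have hγapp : ∀ (x : X) (v : 𝓗), γ x v = Q (Finsupp.single x v) := fun x v => rfl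
  have hγ : ∀ (x y : X) (u v : 𝓗), ⟪γ x u, γ y v⟫ = ⟪u, K x y v⟫ := by
    intro x y u v
    rw [hγapp, hγapp, hQ, Stmt9Aux.B_single_single]
  refine ⟨{ space := ℋ, gamma := γ, factorizes := ?_, total := ?_ }⟩
  · intro x y
    ext v
    refine ext_inner_left ℂ fun u => ?_
    rw [ContinuousLinearMap.comp_apply, ContinuousLinearMap.adjoint_inner_right]
    exact (hγ x y u v).symm
  · have hsub : Set.range ⇑Q
        ⊆ (Submodule.span ℂ (⋃ x : X, Set.range ⇑(γ x)) : Submodule ℂ ℋ) := by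
      rintro _ ⟨f, rfl⟩
      have hdecomp : Q f = ∑ x ∈ f.support, Q (Finsupp.single x (f x)) := by
        conv_lhs => rw [← Finsupp.sum_single f]
        rw [Finsupp.sum, map_sum]
      rw [hdecomp]
      refine Submodule.sum_mem _ fun x _ => Submodule.subset_span ?_
      exact Set.mem_iUnion.2 ⟨x, ⟨f x, (hγapp x (f x)).symm ▸ rfl⟩⟩
    have hd : DenseRange ⇑Q := by
      have h := (UniformSpace.Completion.denseRange_coe
          (α := SeparationQuotient (X →₀ 𝓗))).comp
        SeparationQuotient.surjective_mk.denseRange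
        (UniformSpace.Completion.continuous_coe _)
      exact h
    exact hd.mono hsub
end
end

section
/- Let H be a group, X a set, 𝓗 a complex Hilbert space, and U a unitary representation of H on 𝓗. For i = 1, 2, let ℋ_i be a complex Hilbert space carrying a unitary representation V_i of H, and let γ^i_x : 𝓗 → ℋ_i (x ∈ X) be bounded operators such that: (1) γ^i_x ∘ U(h) = V_i(h) ∘ γ^i_x for all h ∈ H and x ∈ X; (2) the linear span of ∪_{x∈X} range(γ^i_x) is dense in ℋ_i; (3) (γ^1_x)* ∘ γ^1_y = (γ^2_x)* ∘ γ^2_y for all x, y ∈ X. Then there exists a unitary operator W : ℋ_1 → ℋ_2 such that W ∘ V_1(h) = V_2(h) ∘ W for all h ∈ H and W ∘ γ^1_x = γ^2_x for all x ∈ X. -/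
open scoped ComplexInnerProductSpace

noncomputable section

section Aux

variable {H : Type*} [Group H] {X : Type*}
    {𝓗 : Type*} [NormedAddCommGroup 𝓗] [InnerProductSpace ℂ 𝓗] [CompleteSpace 𝓗]
    {ℋ₁ : Type*} [NormedAddCommGroup ℋ₁] [InnerProductSpace ℂ ℋ₁] [CompleteSpace ℋ₁]
    {ℋ₂ : Type*} [NormedAddCommGroup ℋ₂] [InnerProductSpace ℂ ℋ₂] [CompleteSpace ℋ₂]

/-- The combined map sending a finitely supported family to the sum of images. -/
def bigMap (γ : X → 𝓗 →L[ℂ] ℋ₁) : (X →₀ 𝓗) →ₗ[ℂ] ℋ₁ :=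
  Finsupp.lsum ℂ (fun x => (γ x : 𝓗 →ₗ[ℂ] ℋ₁))

lemma bigMap_single (γ : X → 𝓗 →L[ℂ] ℋ₁) (x : X) (ψ : 𝓗) :
    bigMap γ (Finsupp.single x ψ) = γ x ψ := by
  simp [bigMap]

lemma range_bigMap (γ : X → 𝓗 →L[ℂ] ℋ₁) :
    LinearMap.range (bigMap γ) = Submodule.span ℂ (⋃ x : X, Set.range (γ x)) := by
  apply le_antisymm
  · rintro v ⟨l, rfl⟩
    have : bigMap γ l = l.sum fun x m => γ x m := rfl
    rw [this, Finsupp.sum]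
    refine Submodule.sum_mem _ fun x hx => Submodule.subset_span ?_
    exact Set.mem_iUnion.2 ⟨x, ⟨l x, rfl⟩⟩
  · rw [Submodule.span_le]
    rintro v hv
    obtain ⟨x, ψ, rfl⟩ := by simpa using hv
    exact ⟨Finsupp.single x ψ, bigMap_single γ x ψ⟩

lemma inner_bigMap (γ₁ : X → 𝓗 →L[ℂ] ℋ₁) (γ₂ : X → 𝓗 →L[ℂ] ℋ₂)
    (hker : ∀ x y : X,
      (ContinuousLinearMap.adjoint (γ₁ x)).comp (γ₁ y) =
        (ContinuousLinearMap.adjoint (γ₂ x)).comp (γ₂ y))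
    (l m : X →₀ 𝓗) :
    ⟪bigMap γ₁ l, bigMap γ₁ m⟫ = ⟪bigMap γ₂ l, bigMap γ₂ m⟫ := by
  have key : ∀ (x y : X) (a b : 𝓗), ⟪γ₁ x a, γ₁ y b⟫ = ⟪γ₂ x a, γ₂ y b⟫ := by
    intro x y a b
    rw [← ContinuousLinearMap.adjoint_inner_right, ← ContinuousLinearMap.adjoint_inner_right]
    have := congrArg (fun T : 𝓗 →L[ℂ] 𝓗 => ⟪a, T b⟫) (hker x y)
    simpa using this
  have h1 : bigMap γ₁ l = ∑ x ∈ l.support, γ₁ x (l x) := rfl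
  have h2 : bigMap γ₁ m = ∑ y ∈ m.support, γ₁ y (m y) := rfl
  have h3 : bigMap γ₂ l = ∑ x ∈ l.support, γ₂ x (l x) := rfl
  have h4 : bigMap γ₂ m = ∑ y ∈ m.support, γ₂ y (m y) := rfl
  rw [h1, h2, h3, h4, sum_inner, sum_inner]
  refine Finset.sum_congr rfl fun x _ => ?_
  rw [inner_sum, inner_sum]
  exact Finset.sum_congr rfl fun y _ => key x y (l x) (m y)

end Aux

/-- Uniqueness of the minimal covariant factorization: two families of
operators `γ¹, γ²` with total ranges, intertwining a unitary representation `U` of `H`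
with unitary representations `V₁, V₂`, and having the same kernels
`(γ¹_x)* γ¹_y = (γ²_x)* γ²_y`, are related by a unitary intertwiner `W`. -/
theorem extremal_covariant_povm_stmt10
    {H : Type*} [Group H] {X : Type*}
    {𝓗 : Type*} [NormedAddCommGroup 𝓗] [InnerProductSpace ℂ 𝓗] [CompleteSpace 𝓗]
    {ℋ₁ : Type*} [NormedAddCommGroup ℋ₁] [InnerProductSpace ℂ ℋ₁] [CompleteSpace ℋ₁]
    {ℋ₂ : Type*} [NormedAddCommGroup ℋ₂] [InnerProductSpace ℂ ℋ₂] [CompleteSpace ℋ₂]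
    (U : H → 𝓗 ≃ₗᵢ[ℂ] 𝓗)
    (hU_mul : ∀ h₁ h₂ : H, U (h₁ * h₂) = (U h₂).trans (U h₁))
    (V₁ : H → ℋ₁ ≃ₗᵢ[ℂ] ℋ₁)
    (hV₁_mul : ∀ h₁ h₂ : H, V₁ (h₁ * h₂) = (V₁ h₂).trans (V₁ h₁))
    (V₂ : H → ℋ₂ ≃ₗᵢ[ℂ] ℋ₂)
    (hV₂_mul : ∀ h₁ h₂ : H, V₂ (h₁ * h₂) = (V₂ h₂).trans (V₂ h₁))
    (γ₁ : X → 𝓗 →L[ℂ] ℋ₁) (γ₂ : X → 𝓗 →L[ℂ] ℋ₂)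
    (hint₁ : ∀ (h : H) (x : X) (ψ : 𝓗), γ₁ x (U h ψ) = V₁ h (γ₁ x ψ))
    (hint₂ : ∀ (h : H) (x : X) (ψ : 𝓗), γ₂ x (U h ψ) = V₂ h (γ₂ x ψ))
    (htotal₁ : Dense ((Submodule.span ℂ (⋃ x : X, Set.range (γ₁ x)) : Submodule ℂ ℋ₁) : Set ℋ₁))
    (htotal₂ : Dense ((Submodule.span ℂ (⋃ x : X, Set.range (γ₂ x)) : Submodule ℂ ℋ₂) : Set ℋ₂))
    (hker : ∀ x y : X,
      (ContinuousLinearMap.adjoint (γ₁ x)).comp (γ₁ y) =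
        (ContinuousLinearMap.adjoint (γ₂ x)).comp (γ₂ y)) :
    ∃ W : ℋ₁ ≃ₗᵢ[ℂ] ℋ₂,
      (∀ (h : H) (f : ℋ₁), W (V₁ h f) = V₂ h (W f)) ∧
      ∀ (x : X) (ψ : 𝓗), W (γ₁ x ψ) = γ₂ x ψ := by
  classical
  set L₁ := bigMap γ₁ with hL₁
  set L₂ := bigMap γ₂ with hL₂
  have hnorm : ∀ l : X →₀ 𝓗, ‖L₁ l‖ = ‖L₂ l‖ := by
    intro l
    have h := inner_bigMap γ₁ γ₂ hker l l
    rw [inner_self_eq_norm_sq_to_K, inner_self_eq_norm_sq_to_K] at h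
    have h2 : ‖L₁ l‖ ^ 2 = ‖L₂ l‖ ^ 2 := by exact_mod_cast h
    have := congrArg Real.sqrt h2
    simpa [Real.sqrt_sq, norm_nonneg] using this
  -- kernels coincide
  have hKle : LinearMap.ker L₁ ≤ LinearMap.ker L₂ := by
    intro l hl
    rw [LinearMap.mem_ker] at hl ⊢
    have := hnorm l
    rw [hl, norm_zero] at this
    exact norm_eq_zero.mp this.symm
  -- descend L₂ to the range of L₁
  let e : ((X →₀ 𝓗) ⧸ LinearMap.ker L₁) ≃ₗ[ℂ] LinearMap.range L₁ := L₁.quotKerEquivRange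
  let T₀ : (LinearMap.range L₁) →ₗ[ℂ] ℋ₂ :=
    ((LinearMap.ker L₁).liftQ L₂ hKle).comp (e.symm : LinearMap.range L₁ →ₗ[ℂ] _)
  have hT₀ : ∀ l : X →₀ 𝓗, ∀ hm : L₁ l ∈ LinearMap.range L₁, T₀ ⟨L₁ l, hm⟩ = L₂ l := by
    intro l hm
    have he : e.symm ⟨L₁ l, hm⟩ = Submodule.Quotient.mk l := by
      rw [LinearEquiv.symm_apply_eq]
      exact Subtype.ext (L₁.quotKerEquivRange_apply_mk l)
    simp only [T₀, LinearMap.comp_apply, LinearEquiv.coe_coe, he]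
    exact Submodule.liftQ_apply _ _ _
  have hT₀norm : ∀ v : LinearMap.range L₁, ‖T₀ v‖ = ‖v‖ := by
    rintro ⟨v, l, rfl⟩
    rw [hT₀ l ⟨l, rfl⟩, ← hnorm l]
    rfl
  let T : (LinearMap.range L₁) →ₗᵢ[ℂ] ℋ₂ := ⟨T₀, hT₀norm⟩
  -- extend T to all of ℋ₁
  let ι : (LinearMap.range L₁) →L[ℂ] ℋ₁ := (LinearMap.range L₁).subtypeL
  have hι_ind : IsUniformInducing ι := isometry_subtype_coe.isUniformInducing
  have hrange : (Set.range ι) = ((Submodule.span ℂ (⋃ x : X, Set.range (γ₁ x)) : Submodule ℂ ℋ₁) : Set ℋ₁) := by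
    rw [← range_bigMap γ₁]
    exact Subtype.range_coe
  have hι_dense : DenseRange ι := by rw [DenseRange, hrange]; exact htotal₁
  let W₀ : ℋ₁ →L[ℂ] ℋ₂ := T.toContinuousLinearMap.extend ι
  have hW₀γ : ∀ (x : X) (ψ : 𝓗), W₀ (γ₁ x ψ) = γ₂ x ψ := by
    intro x ψ
    have hm : γ₁ x ψ ∈ LinearMap.range L₁ := ⟨Finsupp.single x ψ, bigMap_single γ₁ x ψ⟩
    have : W₀ (ι ⟨γ₁ x ψ, hm⟩) = T ⟨γ₁ x ψ, hm⟩ :=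
      ContinuousLinearMap.extend_eq _ hι_dense hι_ind _
    have h2 : T (⟨γ₁ x ψ, hm⟩ : LinearMap.range L₁) = γ₂ x ψ := by
      have : (⟨γ₁ x ψ, hm⟩ : LinearMap.range L₁) =
          ⟨L₁ (Finsupp.single x ψ), ⟨_, rfl⟩⟩ := Subtype.ext (bigMap_single γ₁ x ψ).symm
      rw [show T (⟨γ₁ x ψ, hm⟩ : LinearMap.range L₁) = T₀ ⟨γ₁ x ψ, hm⟩ from rfl, this]
      rw [hT₀ (Finsupp.single x ψ) ⟨_, rfl⟩]
      exact bigMap_single γ₂ x ψ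
    exact this.trans h2
  -- W₀ is norm preserving
  have hW₀norm : ∀ v : ℋ₁, ‖W₀ v‖ = ‖v‖ := by
    intro v
    have hclosed : IsClosed {v : ℋ₁ | ‖W₀ v‖ = ‖v‖} :=
      isClosed_eq (continuous_norm.comp W₀.continuous) continuous_norm
    refine hι_dense.induction_on v hclosed ?_
    intro w
    have : W₀ (ι w) = T w := ContinuousLinearMap.extend_eq _ hι_dense hι_ind _
    simp only [Set.mem_setOf_eq, this, T.norm_map]
    rfl
  let Wi : ℋ₁ →ₗᵢ[ℂ] ℋ₂ := ⟨W₀.toLinearMap, hW₀norm⟩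
  -- surjectivity
  have hsurj : Function.Surjective Wi := by
    have hclosedrange : IsClosed (Set.range Wi) :=
      Wi.isometry.isClosedEmbedding.isClosed_range
    have hsub : ((Submodule.span ℂ (⋃ x : X, Set.range (γ₂ x)) : Submodule ℂ ℋ₂) : Set ℋ₂)
        ⊆ Set.range Wi := by
      have hle : Submodule.span ℂ (⋃ x : X, Set.range (γ₂ x)) ≤ LinearMap.range Wi.toLinearMap := by
        refine Submodule.span_le.mpr ?_
        rintro v hv
        obtain ⟨x, ψ, rfl⟩ := by simpa using hv
        exact ⟨γ₁ x ψ, hW₀γ x ψ⟩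
      intro v hv
      obtain ⟨y, hy⟩ := hle hv
      exact ⟨y, hy⟩
    intro v
    have : v ∈ closure ((Submodule.span ℂ (⋃ x : X, Set.range (γ₂ x)) : Submodule ℂ ℋ₂) : Set ℋ₂) :=
      htotal₂ v
    have := closure_mono hsub this
    rwa [hclosedrange.closure_eq] at this
  refine ⟨LinearIsometryEquiv.ofSurjective Wi hsurj, ?_, ?_⟩
  · intro h f
    have hW : ∀ u, (LinearIsometryEquiv.ofSurjective Wi hsurj) u = W₀ u := fun u =>
      congrFun (LinearIsometryEquiv.coe_ofSurjective Wi hsurj) u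
    rw [hW, hW]
    -- prove W₀ intertwines
    have hclosed : IsClosed {f : ℋ₁ | W₀ (V₁ h f) = V₂ h (W₀ f)} :=
      isClosed_eq (W₀.continuous.comp (V₁ h).continuous)
        ((V₂ h).continuous.comp W₀.continuous)
    have hdense := htotal₁
    have hmem : ∀ f ∈ (Submodule.span ℂ (⋃ x : X, Set.range (γ₁ x)) : Submodule ℂ ℋ₁),
        W₀ (V₁ h f) = V₂ h (W₀ f) := by
      intro f hf
      induction hf using Submodule.span_induction with
      | mem v hv =>
        obtain ⟨x, ψ, rfl⟩ := by simpa using hv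
        rw [← hint₁ h x ψ, hW₀γ, hW₀γ, hint₂ h x ψ]
      | zero => simp
      | add a b _ _ ha hb => simp [map_add, ha, hb]
      | smul c a _ ha => simp [map_smul, ha]
    have : f ∈ closure ((Submodule.span ℂ (⋃ x : X, Set.range (γ₁ x)) : Submodule ℂ ℋ₁) : Set ℋ₁) :=
      hdense f
    have hsubset : ((Submodule.span ℂ (⋃ x : X, Set.range (γ₁ x)) : Submodule ℂ ℋ₁) : Set ℋ₁)
        ⊆ {f : ℋ₁ | W₀ (V₁ h f) = V₂ h (W₀ f)} := fun g hg => hmem g hg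
    exact (closure_minimal hsubset hclosed) this
  · intro x ψ
    have hW : ∀ u, (LinearIsometryEquiv.ofSurjective Wi hsurj) u = W₀ u := fun u =>
      congrFun (LinearIsometryEquiv.coe_ofSurjective Wi hsurj) u
    rw [hW]
    exact hW₀γ x ψ
end
end

section
/- Let G be a compact, Hausdorff, second countable abelian topological group, H a closed subgroup, Ω = G/H with canonical projection q and normalized G-invariant measure μ_Ω = q_*μ_G, and let H^⊥ = { π ∈ Ĝ : π(h) = 1 for all h ∈ H }. Let π, ρ ∈ Ĝ. If π⁻¹ρ ∉ H^⊥, then ∫_{q⁻¹(X)} \overline{π(g)} ρ(g) dμ_G(g) = 0 for every Borel set X ⊆ Ω. If π⁻¹ρ ∈ H^⊥, so that the function g ↦ \overline{π(g)} ρ(g) is H-invariant and descends to a continuous function F on Ω, then ∫_{q⁻¹(X)} \overline{π(g)} ρ(g) dμ_G(g) = ∫_X F dμ_Ω for every Borel set X ⊆ Ω. -/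
open MeasureTheory
open scoped Pointwise ENNReal

noncomputable section

/-- Orthogonality relations on the quotient: for characters `π, ρ` of a
compact abelian group `G` and a closed subgroup `H`, if `π⁻¹ρ ∉ H^⊥` then
`∫_{q⁻¹(X)} conj(π) ρ dμ_G = 0` for every Borel `X ⊆ Ω = G/H`; if `π⁻¹ρ ∈ H^⊥` then
`conj(π) ρ` descends to a continuous function `F` on `Ω` and
`∫_{q⁻¹(X)} conj(π) ρ dμ_G = ∫_X F dμ_Ω` with `μ_Ω = q_* μ_G`. -/
theorem extremal_covariant_povm_stmt15
    {G : Type*} [CommGroup G] [TopologicalSpace G] [IsTopologicalGroup G] [CompactSpace G]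
    [T2Space G] [SecondCountableTopology G] [MeasurableSpace G] [BorelSpace G]
    (μG : Measure G) [μG.IsHaarMeasure] [IsProbabilityMeasure μG]
    (H : Subgroup G) [MeasurableSpace (G ⧸ H)] [BorelSpace (G ⧸ H)]
    (χπ χρ : G → ℂ)
    (hπ_cont : Continuous χπ) (hρ_cont : Continuous χρ)
    (hπ_mul : ∀ g g' : G, χπ (g * g') = χπ g * χπ g')
    (hρ_mul : ∀ g g' : G, χρ (g * g') = χρ g * χρ g')
    (hπ_norm : ∀ g, ‖χπ g‖ = 1) (hρ_norm : ∀ g, ‖χρ g‖ = 1) :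
    (¬ (∀ h ∈ H, (starRingEnd ℂ) (χπ h) * χρ h = 1) →
      ∀ X : Set (G ⧸ H), MeasurableSet X →
        ∫ g in ((QuotientGroup.mk : G → G ⧸ H) ⁻¹' X),
          (starRingEnd ℂ) (χπ g) * χρ g ∂μG = 0) ∧
    ((∀ h ∈ H, (starRingEnd ℂ) (χπ h) * χρ h = 1) →
      ∃ F : G ⧸ H → ℂ, Continuous F ∧
        (∀ g : G, F (QuotientGroup.mk g) = (starRingEnd ℂ) (χπ g) * χρ g) ∧
        ∀ X : Set (G ⧸ H), MeasurableSet X →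
          ∫ g in ((QuotientGroup.mk : G → G ⧸ H) ⁻¹' X),
            (starRingEnd ℂ) (χπ g) * χρ g ∂μG =
          ∫ ω in X, F ω ∂(μG.map (QuotientGroup.mk : G → G ⧸ H))) := by
  set χ : G → ℂ := fun g => (starRingEnd ℂ) (χπ g) * χρ g with hχ
  have hχ_cont : Continuous χ := (Complex.continuous_conj.comp hπ_cont).mul hρ_cont
  have hχ_mul : ∀ g g' : G, χ (g * g') = χ g * χ g' := by
    intro g g'
    simp only [hχ, hπ_mul, hρ_mul, map_mul]
    ring
  -- invariance of q⁻¹' X under multiplication by elements of H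
  have hpre : ∀ (h : G), h ∈ H → ∀ X : Set (G ⧸ H),
      ((h * ·) ⁻¹' ((QuotientGroup.mk : G → G ⧸ H) ⁻¹' X)) =
        ((QuotientGroup.mk : G → G ⧸ H) ⁻¹' X) := by
    intro h hh X
    ext g
    simp only [Set.mem_preimage]
    have : (QuotientGroup.mk (h * g) : G ⧸ H) = QuotientGroup.mk g := by
      rw [QuotientGroup.eq]
      simpa using H.inv_mem hh
    rw [this]
  have hmul_int : ∀ (h : G), h ∈ H → ∀ X : Set (G ⧸ H),
      ∫ g in ((QuotientGroup.mk : G → G ⧸ H) ⁻¹' X), χ g ∂μG =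
        χ h * ∫ g in ((QuotientGroup.mk : G → G ⧸ H) ⁻¹' X), χ g ∂μG := by
    intro h hh X
    have := (measurePreserving_mul_left μG h).setIntegral_preimage_emb
      (measurableEmbedding_mulLeft h) χ ((QuotientGroup.mk : G → G ⧸ H) ⁻¹' X)
    rw [hpre h hh X] at this
    calc ∫ g in ((QuotientGroup.mk : G → G ⧸ H) ⁻¹' X), χ g ∂μG
        = ∫ g in ((QuotientGroup.mk : G → G ⧸ H) ⁻¹' X), χ (h * g) ∂μG := this.symm
      _ = ∫ g in ((QuotientGroup.mk : G → G ⧸ H) ⁻¹' X), χ h * χ g ∂μG := by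
            simp_rw [hχ_mul h]
      _ = χ h * ∫ g in ((QuotientGroup.mk : G → G ⧸ H) ⁻¹' X), χ g ∂μG :=
            integral_const_mul _ _
  constructor
  · intro hne0 X hX
    push_neg at hne0
    obtain ⟨h, hh, hne⟩ := hne0
    have key := hmul_int h hh X
    have : (χ h - 1) * ∫ g in ((QuotientGroup.mk : G → G ⧸ H) ⁻¹' X), χ g ∂μG = 0 := by
      rw [sub_mul, one_mul, ← key, sub_self]
    rcases mul_eq_zero.mp this with h0 | h0
    · exact absurd (by linear_combination h0) hne
    · exact h0
  · intro hinv
    have hresp : ∀ g g' : G, (QuotientGroup.mk g : G ⧸ H) = QuotientGroup.mk g' →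
        χ g = χ g' := by
      intro g g' hgg'
      rw [QuotientGroup.eq] at hgg'
      have := hχ_mul g (g⁻¹ * g')
      rw [mul_inv_cancel_left] at this
      rw [this, show χ (g⁻¹ * g') = 1 from hinv _ hgg', mul_one]
    refine ⟨fun ω => χ ω.out, ?_, ?_, ?_⟩
    · rw [(QuotientGroup.isQuotientMap_mk H).continuous_iff]
      have : (fun g : G => χ ((QuotientGroup.mk g : G ⧸ H).out)) = χ := by
        funext g
        exact hresp _ _ (by simp [QuotientGroup.out_eq'])
      rw [Function.comp_def, this]
      exact hχ_cont
    · intro g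
      exact hresp _ _ (by simp [QuotientGroup.out_eq'])
    · intro X hX
      have hq : Measurable (QuotientGroup.mk : G → G ⧸ H) :=
        Continuous.measurable (QuotientGroup.isQuotientMap_mk H).continuous
      have hF : (fun ω : G ⧸ H => χ ω.out) = fun ω => χ ω.out := rfl
      have hFm : AEStronglyMeasurable (fun ω : G ⧸ H => χ ω.out)
          (μG.map (QuotientGroup.mk : G → G ⧸ H)) := by
        refine Continuous.aestronglyMeasurable ?_
        rw [(QuotientGroup.isQuotientMap_mk H).continuous_iff]
        have : (fun g : G => χ ((QuotientGroup.mk g : G ⧸ H).out)) = χ := by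
          funext g
          exact hresp _ _ (by simp [QuotientGroup.out_eq'])
        rw [Function.comp_def, this]
        exact hχ_cont
      rw [setIntegral_map hX hFm hq.aemeasurable]
      congr 1
      funext g
      exact (hresp _ _ (by simp [QuotientGroup.out_eq'])).symm
end
end
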